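/- Let k ≥ 1 be an integer, β ∈ (1,2) and α ∈ (k−1, k−1/β). Let g : ℝ → ℝ vanish on (−∞,0), be k-times continuously differentiable on (0,∞) with |g^{(k)}(t)| ≤ C t^{α−k} for all t > 0, and be such that ζ(t) := g(t) t^{−α} has the property that lim_{t↓0} ζ^{(j)}(t) exists in ℝ for all j = 0,…,k. Define g_{i,n,k−1}(s) := ∑_{j=0}^{k−1} (−1)^j binom(k−1,j) g((i−j)/n − s). Then, interpreting g^{(k−1)} as 0 on (−∞,0], one has the convergence ∫_ℝ |n^{k−1} ( g_{n,n,k−1}(s) − g_{k−1,n,k−1}(s) )|^β ds → ∫_ℝ |g^{(k−1)}(1−s) − g^{(k−1)}(−s)|^β ds =: c₀ as n → ∞, and c₀ < ∞. -/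

import Mathlib

open MeasureTheory Filter Set Topology

/-- The kernel of the `m`-th order increment of the driven moving average:
`g_{i,n,m}(s) = ∑_{j=0}^m (−1)^j (m choose j) g((i−j)/n − s)`. -/
noncomputable def ginKernel (g : ℝ → ℝ) (m n i : ℕ) (s : ℝ) : ℝ :=
  ∑ j ∈ Finset.range (m + 1), (-1 : ℝ) ^ j * (m.choose j : ℝ) *
    g (((i : ℝ) - (j : ℝ)) / (n : ℝ) - s)

section StatementAux

noncomputable def dIter (f : ℝ → ℝ) (h : ℝ) : ℕ → ℝ → ℝ
  | 0 => f
  | (m+1) => fun x => dIter f h m x - dIter f h m (x - h)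

lemma dsum_eq_dIter (f : ℝ → ℝ) (h : ℝ) (m : ℕ) (x : ℝ) :
    ∑ j ∈ Finset.range (m + 1), (-1 : ℝ) ^ j * (m.choose j : ℝ) * f (x - j * h)
      = dIter f h m x := by
  induction m generalizing x with
  | zero => simp [dIter]
  | succ m ih =>
    have key : ∑ j ∈ Finset.range (m + 2), (-1 : ℝ) ^ j * ((m+1).choose j : ℝ) * f (x - j * h)
        = (∑ j ∈ Finset.range (m + 1), (-1 : ℝ) ^ j * (m.choose j : ℝ) * f (x - j * h))
          - ∑ j ∈ Finset.range (m + 1), (-1 : ℝ) ^ j * (m.choose j : ℝ) * f ((x - h) - j * h) := by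
      set a : ℕ → ℝ := fun j => f (x - j * h) with ha
      have haShift : ∀ j : ℕ, f ((x - h) - j * h) = a (j + 1) := by
        intro j; simp only [ha]; congr 1; push_cast; ring
      set F1 : ℕ → ℝ := fun j => (-1 : ℝ) ^ j * ((m+1).choose j : ℝ) * a j with hF1
      set F2 : ℕ → ℝ := fun j => (-1 : ℝ) ^ j * (m.choose j : ℝ) * a j with hF2
      have h1 : ∑ j ∈ Finset.range (m + 2), F1 j
          = (∑ j ∈ Finset.range (m + 1), F1 (j + 1)) + F1 0 :=
        Finset.sum_range_succ' F1 (m + 1)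
      have h2 : ∀ j : ℕ, F1 (j + 1) = F2 (j + 1) - (-1 : ℝ) ^ j * (m.choose j : ℝ) * a (j + 1) := by
        intro j
        simp only [hF1, hF2, Nat.choose_succ_succ]
        push_cast; ring
      have h3 : ∑ j ∈ Finset.range (m + 1), F1 (j + 1)
          = (∑ j ∈ Finset.range (m + 1), F2 (j + 1))
            - ∑ j ∈ Finset.range (m + 1), (-1 : ℝ) ^ j * (m.choose j : ℝ) * a (j + 1) := by
        rw [← Finset.sum_sub_distrib]
        exact Finset.sum_congr rfl fun j _ => h2 j
      have h4 : ∑ j ∈ Finset.range (m + 1), F2 j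
          = (∑ j ∈ Finset.range (m + 1), F2 (j + 1)) + F2 0 := by
        have t1 := Finset.sum_range_succ' F2 (m + 1)
        rw [Finset.sum_range_succ F2 (m + 1)] at t1
        have : F2 (m + 1) = 0 := by
          simp [hF2, Nat.choose_succ_self]
        rw [this, add_zero] at t1
        exact t1
      have h5 : F1 0 = F2 0 := by simp [hF1, hF2]
      calc ∑ j ∈ Finset.range (m + 2), (-1 : ℝ) ^ j * ((m+1).choose j : ℝ) * f (x - j * h)
          = ∑ j ∈ Finset.range (m + 2), F1 j := rfl
        _ = (∑ j ∈ Finset.range (m + 1), F2 (j + 1))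
            - (∑ j ∈ Finset.range (m + 1), (-1 : ℝ) ^ j * (m.choose j : ℝ) * a (j + 1)) + F2 0 := by
            rw [h1, h3, h5]
        _ = (∑ j ∈ Finset.range (m + 1), F2 j)
            - ∑ j ∈ Finset.range (m + 1), (-1 : ℝ) ^ j * (m.choose j : ℝ) * f ((x - h) - j * h) := by
            rw [h4]
            have : ∑ j ∈ Finset.range (m + 1), (-1 : ℝ) ^ j * (m.choose j : ℝ) * f ((x - h) - j * h)
                = ∑ j ∈ Finset.range (m + 1), (-1 : ℝ) ^ j * (m.choose j : ℝ) * a (j + 1) :=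
              Finset.sum_congr rfl fun j _ => by rw [haShift j]
            rw [this]; ring
        _ = _ := rfl
    rw [key, ih, ih]; rfl

lemma dIter_hasDerivAt (f f' : ℝ → ℝ) (hf : ∀ x, HasDerivAt f (f' x) x) (h : ℝ) (m : ℕ) :
    ∀ x, HasDerivAt (dIter f h m) (dIter f' h m x) x := by
  induction m with
  | zero => exact hf
  | succ m ih =>
    intro x
    have h2 : HasDerivAt (fun y => dIter f h m (y - h)) (dIter f' h m (x - h)) x := by
      have := (ih (x - h)).comp x (((hasDerivAt_id x).sub_const h))
      simp only [mul_one] at this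
      exact this
    exact ((ih x).sub h2)

lemma dIter_mvt (m : ℕ) (F : ℕ → ℝ → ℝ)
    (hF : ∀ j < m, ∀ x, HasDerivAt (F j) (F (j + 1) x) x)
    {h : ℝ} (hh : 0 < h) (x : ℝ) :
    ∃ ξ ∈ Icc (x - m * h) x, dIter (F 0) h m x = h ^ m * F m ξ := by
  induction m generalizing F x with
  | zero =>
    exact ⟨x, by simp, by simp [dIter]⟩
  | succ m ih =>
    have hd : ∀ y, HasDerivAt (dIter (F 0) h m) (dIter (F 1) h m y) y :=
      dIter_hasDerivAt (F 0) (F 1) (hF 0 (Nat.succ_pos m)) h m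
    have hlt : x - h < x := by linarith
    obtain ⟨c, hc, hceq⟩ := exists_hasDerivAt_eq_slope (dIter (F 0) h m) (dIter (F 1) h m)
      hlt (fun y _ => (hd y).continuousAt.continuousWithinAt) (fun y _ => hd y)
    have hstep : dIter (F 0) h (m + 1) x = h * dIter (F 1) h m c := by
      have hne : x - (x - h) = h := by ring
      rw [hne] at hceq
      have heq : dIter (F 0) h (m+1) x = dIter (F 0) h m x - dIter (F 0) h m (x - h) := rfl
      rw [heq]
      field_simp [ne_of_gt hh] at hceq
      linear_combination hceq.symm
    obtain ⟨ξ, hξ, hξeq⟩ := ih (fun j => F (j + 1))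
      (fun j hj y => hF (j + 1) (Nat.succ_lt_succ hj) y) c
    refine ⟨ξ, ?_, ?_⟩
    · constructor
      · have h1 := hξ.1
        have h2 := hc.1
        push_cast at h1 ⊢
        nlinarith [hh.le]
      · exact hξ.2.trans (le_of_lt hc.2)
    · rw [hstep, hξeq]; ring

lemma iter_hasDerivAt {g : ℝ → ℝ} {k : ℕ} (hgk : ContDiffOn ℝ (k : ℕ∞) g (Set.Ioi (0:ℝ)))
    {j : ℕ} (hj : j < k) {x : ℝ} (hx : 0 < x) :
    HasDerivAt (iteratedDerivWithin j g (Set.Ioi (0:ℝ)))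
      (iteratedDerivWithin (j+1) g (Set.Ioi (0:ℝ)) x) x := by
  have hu : UniqueDiffOn ℝ (Set.Ioi (0:ℝ)) := uniqueDiffOn_Ioi 0
  have hdiff : DifferentiableOn ℝ (iteratedDerivWithin j g (Set.Ioi (0:ℝ))) (Set.Ioi (0:ℝ)) :=
    hgk.differentiableOn_iteratedDerivWithin (by exact_mod_cast hj) hu
  have hxmem : x ∈ Set.Ioi (0:ℝ) := hx
  have hda : DifferentiableAt ℝ (iteratedDerivWithin j g (Set.Ioi (0:ℝ))) x :=
    (hdiff x hxmem).differentiableAt (Ioi_mem_nhds hx)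
  have hval : iteratedDerivWithin (j+1) g (Set.Ioi (0:ℝ)) x
      = deriv (iteratedDerivWithin j g (Set.Ioi (0:ℝ))) x := by
    rw [iteratedDerivWithin_succ,
      derivWithin_of_isOpen isOpen_Ioi hxmem]
  rw [hval]
  exact hda.hasDerivAt

lemma iteratedDerivWithin_rpow' (p : ℝ) (i : ℕ) {t : ℝ} (ht : 0 < t) :
    iteratedDerivWithin i (fun t : ℝ => t ^ p) (Set.Ioi (0:ℝ)) t
      = (∏ l ∈ Finset.range i, (p - l)) * t ^ (p - i) := by
  have hu : UniqueDiffOn ℝ (Set.Ioi (0:ℝ)) := uniqueDiffOn_Ioi 0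
  induction i generalizing t with
  | zero => simp
  | succ i ih =>
    have hxmem : t ∈ Set.Ioi (0:ℝ) := ht
    rw [iteratedDerivWithin_succ]
    have hcongr : Set.EqOn (iteratedDerivWithin i (fun t : ℝ => t ^ p) (Set.Ioi (0:ℝ)))
        (fun t : ℝ => (∏ l ∈ Finset.range i, (p - l)) * t ^ (p - i)) (Set.Ioi (0:ℝ)) :=
      fun y hy => ih hy
    rw [derivWithin_congr hcongr (hcongr hxmem), derivWithin_of_isOpen isOpen_Ioi hxmem]
    have hd : HasDerivAt (fun t : ℝ => (∏ l ∈ Finset.range i, (p - l)) * t ^ (p - i))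
        ((∏ l ∈ Finset.range i, (p - l)) * ((p - i) * t ^ (p - i - 1))) t :=
      (Real.hasDerivAt_rpow_const (Or.inl (ne_of_gt ht))).const_mul _
    rw [hd.deriv, Finset.prod_range_succ]
    have : p - i - 1 = p - (i + 1 : ℕ) := by push_cast; ring
    rw [this]; ring

lemma deriv_bound_near_zero {k : ℕ} {α : ℝ} (g : ℝ → ℝ)
    (hgk : ContDiffOn ℝ (k : ℕ∞) g (Set.Ioi (0 : ℝ)))
    (hζ : ∀ j : ℕ, j ≤ k → ∃ L : ℝ,
      Tendsto (iteratedDerivWithin j (fun t : ℝ => g t * t ^ (-α)) (Set.Ioi (0 : ℝ)))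
        (𝓝[>] (0 : ℝ)) (nhds L))
    {j : ℕ} (hj : j ≤ k) :
    ∃ A : ℝ, 0 ≤ A ∧ ∀ᶠ t in 𝓝[>] (0:ℝ),
      |iteratedDerivWithin j g (Set.Ioi (0:ℝ)) t| ≤ A * t ^ (α - j) := by
  classical
  have hu : UniqueDiffOn ℝ (Set.Ioi (0:ℝ)) := uniqueDiffOn_Ioi 0
  set ζ : ℝ → ℝ := fun t => g t * t ^ (-α) with hζdef
  have hζ' : ∀ i : ℕ, ∃ L : ℝ, i ≤ k →
      Tendsto (iteratedDerivWithin i ζ (Set.Ioi (0:ℝ))) (𝓝[>] (0:ℝ)) (nhds L) := by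
    intro i
    by_cases h : i ≤ k
    · exact (hζ i h).imp fun L hL _ => hL
    · exact ⟨0, fun h' => absurd h' h⟩
  choose L hL using hζ'
  set M : ℕ → ℝ := fun i => |L i| + 1 with hM
  have hMpos : ∀ i, 0 < M i := fun i => by positivity
  have hMb : ∀ i ≤ k, ∀ᶠ t in 𝓝[>] (0:ℝ),
      |iteratedDerivWithin i ζ (Set.Ioi (0:ℝ)) t| ≤ M i := by
    intro i hi
    filter_upwards [(hL i hi) (Metric.ball_mem_nhds (L i) one_pos)] with t ht
    simp only [Set.mem_preimage, Metric.mem_ball, Real.dist_eq] at ht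
    calc |iteratedDerivWithin i ζ (Set.Ioi (0:ℝ)) t|
        = |(iteratedDerivWithin i ζ (Set.Ioi (0:ℝ)) t - L i) + L i| := by rw [sub_add_cancel]
      _ ≤ |iteratedDerivWithin i ζ (Set.Ioi (0:ℝ)) t - L i| + |L i| := abs_add_le _ _
      _ ≤ M i := by rw [hM]; dsimp; linarith
  have hpowc : ∀ p : ℝ, ContDiffOn ℝ (k : ℕ∞) (fun t : ℝ => t ^ p) (Set.Ioi (0:ℝ)) :=
    fun p x hx => (Real.contDiffAt_rpow_const_of_ne (ne_of_gt hx)).contDiffWithinAt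
  have hζc : ContDiffOn ℝ (k : ℕ∞) ζ (Set.Ioi (0:ℝ)) := hgk.mul (hpowc (-α))
  have hgeq : Set.EqOn (fun t : ℝ => ζ t * t ^ α) g (Set.Ioi (0:ℝ)) := by
    intro y hy
    have hy0 : (0:ℝ) < y := hy
    have hne : y ^ α ≠ 0 := ne_of_gt (Real.rpow_pos_of_pos hy0 α)
    simp only [hζdef]
    rw [Real.rpow_neg (le_of_lt hy0)]
    field_simp
  refine ⟨∑ i ∈ Finset.range (j + 1), (j.choose i : ℝ) * M i *
      |∏ l ∈ Finset.range (j - i), (α - l)|, ?_, ?_⟩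
  · apply Finset.sum_nonneg
    intro i _
    have := (hMpos i).le
    positivity
  · have hall : ∀ᶠ t in 𝓝[>] (0:ℝ), ∀ i ∈ Finset.range (k + 1),
        |iteratedDerivWithin i ζ (Set.Ioi (0:ℝ)) t| ≤ M i := by
      rw [Filter.eventually_all_finset]
      intro i hi
      exact hMb i (Nat.lt_succ_iff.mp (Finset.mem_range.mp hi))
    have hIoo : ∀ᶠ t in 𝓝[>] (0:ℝ), t ∈ Set.Ioo (0:ℝ) 1 :=
      Ioo_mem_nhdsGT_of_mem ⟨le_refl 0, one_pos⟩
    filter_upwards [hall, hIoo] with t hallt htIoo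
    obtain ⟨ht0, ht1⟩ := htIoo
    have htmem : t ∈ Set.Ioi (0:ℝ) := ht0
    have hcongr : iteratedDerivWithin j g (Set.Ioi (0:ℝ)) t
        = iteratedDerivWithin j (fun y : ℝ => ζ y * y ^ α) (Set.Ioi (0:ℝ)) t :=
      (iteratedDerivWithin_congr hgeq htmem).symm
    rw [hcongr]
    have habs : |iteratedDerivWithin j (fun y : ℝ => ζ y * y ^ α) (Set.Ioi (0:ℝ)) t|
        = ‖iteratedFDerivWithin ℝ j (fun y : ℝ => ζ y * y ^ α) (Set.Ioi (0:ℝ)) t‖ := by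
      rw [norm_iteratedFDerivWithin_eq_norm_iteratedDerivWithin, Real.norm_eq_abs]
    rw [habs]
    have hjN : (j : WithTop ℕ∞) ≤ ((k : ℕ∞) : WithTop ℕ∞) := by exact_mod_cast hj
    have hmul := norm_iteratedFDerivWithin_mul_le (𝕜 := ℝ) hζc (hpowc α) hu htmem hjN
    refine hmul.trans ?_
    rw [Finset.sum_mul]
    apply Finset.sum_le_sum
    intro i hi
    have hik : i ≤ j := Nat.lt_succ_iff.mp (Finset.mem_range.mp hi)
    have hζb : ‖iteratedFDerivWithin ℝ i ζ (Set.Ioi (0:ℝ)) t‖ ≤ M i := by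
      rw [norm_iteratedFDerivWithin_eq_norm_iteratedDerivWithin, Real.norm_eq_abs]
      exact hallt i (Finset.mem_range.mpr (Nat.lt_succ_of_le (hik.trans hj)))
    have hpowb : ‖iteratedFDerivWithin ℝ (j - i) (fun y : ℝ => y ^ α) (Set.Ioi (0:ℝ)) t‖
        ≤ |∏ l ∈ Finset.range (j - i), (α - l)| * t ^ (α - j) := by
      rw [norm_iteratedFDerivWithin_eq_norm_iteratedDerivWithin, Real.norm_eq_abs,
        iteratedDerivWithin_rpow' α (j - i) ht0, abs_mul,
        abs_of_nonneg (Real.rpow_nonneg (le_of_lt ht0) _)]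
      have hexp : α - j ≤ α - (j - i : ℕ) := by
        have : ((j - i : ℕ) : ℝ) ≤ (j : ℝ) := by exact_mod_cast Nat.sub_le j i
        linarith
      exact mul_le_mul_of_nonneg_left
        (Real.rpow_le_rpow_of_exponent_ge ht0 (le_of_lt ht1) hexp) (abs_nonneg _)
    calc (j.choose i : ℝ) * ‖iteratedFDerivWithin ℝ i ζ (Set.Ioi (0:ℝ)) t‖ *
          ‖iteratedFDerivWithin ℝ (j - i) (fun y : ℝ => y ^ α) (Set.Ioi (0:ℝ)) t‖
        ≤ (j.choose i : ℝ) * M i * (|∏ l ∈ Finset.range (j - i), (α - l)| * t ^ (α - j)) := by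
          apply mul_le_mul
          · exact mul_le_mul_of_nonneg_left hζb (by positivity)
          · exact hpowb
          · exact norm_nonneg _
          · have := (hMpos i).le; positivity
      _ = (j.choose i : ℝ) * M i * |∏ l ∈ Finset.range (j - i), (α - l)| * t ^ (α - j) := by ring

noncomputable def zext (f : ℝ → ℝ) : ℝ → ℝ := fun t => if 0 < t then f t else 0

lemma zext_nonpos {f : ℝ → ℝ} {t : ℝ} (ht : t ≤ 0) : zext f t = 0 := if_neg (not_lt.mpr ht)
lemma zext_pos {f : ℝ → ℝ} {t : ℝ} (ht : 0 < t) : zext f t = f t := if_pos ht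

lemma tendsto_rpow_zero_of_pos {q : ℝ} (hq : 0 < q) :
    Tendsto (fun t : ℝ => t ^ q) (𝓝[>] (0:ℝ)) (𝓝 0) := by
  have h1 : ContinuousAt (fun t : ℝ => t ^ q) 0 :=
    Real.continuousAt_rpow_const 0 q (Or.inr hq.le)
  have h0 : (0:ℝ) ^ q = 0 := Real.zero_rpow (ne_of_gt hq)
  have h2 := h1.tendsto
  rw [h0] at h2
  exact tendsto_nhdsWithin_of_tendsto_nhds h2

lemma zext_continuous {f : ℝ → ℝ} (hf : ∀ x > (0:ℝ), ContinuousAt f x)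
    (h0 : Tendsto f (𝓝[>] (0:ℝ)) (𝓝 0)) : Continuous (zext f) := by
  rw [continuous_iff_continuousAt]
  intro x
  rcases lt_trichotomy x 0 with hx | hx | hx
  · have hev : (fun _ : ℝ => (0:ℝ)) =ᶠ[𝓝 x] zext f := by
      filter_upwards [Iio_mem_nhds hx] with y hy
      exact (zext_nonpos (le_of_lt hy)).symm
    exact (continuousAt_const (y := (0:ℝ))).congr hev
  · subst hx
    have hz : zext f 0 = 0 := zext_nonpos le_rfl
    unfold ContinuousAt
    rw [hz]
    have hleft : Tendsto (zext f) (𝓝[≤] (0:ℝ)) (𝓝 0) := by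
      refine tendsto_const_nhds.congr' ?_
      filter_upwards [self_mem_nhdsWithin] with y hy
      exact (zext_nonpos hy).symm
    have hright : Tendsto (zext f) (𝓝[>] (0:ℝ)) (𝓝 0) := by
      refine h0.congr' ?_
      filter_upwards [self_mem_nhdsWithin] with y hy
      exact (zext_pos hy).symm
    have := tendsto_sup.2 ⟨hleft, hright⟩
    rwa [nhdsLE_sup_nhdsGT (0:ℝ)] at this
  · have hev : f =ᶠ[𝓝 x] zext f := by
      filter_upwards [Ioi_mem_nhds hx] with y hy
      exact (zext_pos hy).symm
    exact (hf x hx).congr hev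

lemma zext_hasDerivAt_pos {f : ℝ → ℝ} {d x : ℝ} (hx : 0 < x) (hf : HasDerivAt f d x) :
    HasDerivAt (zext f) d x := by
  refine hf.congr_of_eventuallyEq ?_
  filter_upwards [Ioi_mem_nhds hx] with y hy
  exact zext_pos hy

lemma zext_hasDerivAt_neg {f : ℝ → ℝ} {x : ℝ} (hx : x < 0) :
    HasDerivAt (zext f) 0 x := by
  refine (hasDerivAt_const x (0:ℝ)).congr_of_eventuallyEq ?_
  filter_upwards [Iio_mem_nhds hx] with y hy
  exact zext_nonpos (le_of_lt hy)

lemma zext_hasDerivAt_zero {f : ℝ → ℝ} {p A : ℝ} (hp : 1 < p)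
    (hb : ∀ᶠ t in 𝓝[>] (0:ℝ), |f t| ≤ A * t ^ p) :
    HasDerivAt (zext f) 0 0 := by
  rw [hasDerivAt_iff_tendsto_slope]
  rw [← nhdsLT_sup_nhdsGT (0:ℝ), tendsto_sup]
  constructor
  · refine tendsto_const_nhds.congr' ?_
    filter_upwards [self_mem_nhdsWithin] with y hy
    have hy' : y < 0 := hy
    rw [slope_def_field, zext_nonpos (le_of_lt hy'), zext_nonpos le_rfl]
    simp
  · have hbb : ∀ᶠ t in 𝓝[>] (0:ℝ), ‖slope (zext f) 0 t‖ ≤ A * t ^ (p - 1) := by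
      filter_upwards [hb, self_mem_nhdsWithin] with t htb ht
      have ht0 : (0:ℝ) < t := ht
      rw [slope_def_field, zext_nonpos le_rfl, zext_pos ht0]
      have hq : (f t - 0) / (t - 0) = f t / t := by ring_nf
      rw [Real.norm_eq_abs, hq, abs_div, abs_of_pos ht0]
      rw [div_le_iff₀ ht0]
      calc |f t| ≤ A * t ^ p := htb
        _ = A * t ^ (p - 1) * t := by
            rw [Real.rpow_sub ht0, Real.rpow_one]
            field_simp
    refine squeeze_zero_norm' hbb ?_
    have := (tendsto_rpow_zero_of_pos (by linarith : (0:ℝ) < p - 1)).const_mul A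
    simpa using this

end StatementAux

lemma ginKernel_eq_dIter (g : ℝ → ℝ) (m n i : ℕ) (s : ℝ) :
    ginKernel g m n i s = dIter g (1 / (n : ℝ)) m ((i : ℝ) / (n : ℝ) - s) := by
  rw [← dsum_eq_dIter]
  refine Finset.sum_congr rfl fun j _ => ?_
  congr 1
  rw [sub_div]
  ring

/-- the `L^β`-convergence (5.32) of the paper: under Assumption (A2)
with `β ∈ (1,2)` and `α ∈ (k−1, k−1/β)`, interpreting `g^{(k−1)}` as `0` on `(−∞,0]`,
one has `∫ |n^{k−1}(g_{n,n,k−1}(s) − g_{k−1,n,k−1}(s))|^β ds →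
∫ |g^{(k−1)}(1−s) − g^{(k−1)}(−s)|^β ds =: c₀ < ∞` as `n → ∞`. -/
theorem statement18
    {k : ℕ} (hk : 1 ≤ k) {β α : ℝ} (hβ1 : 1 < β) (hβ2 : β < 2)
    (hα1 : (k : ℝ) - 1 < α) (hα2 : α < (k : ℝ) - 1 / β)
    (g : ℝ → ℝ)
    (hg0 : ∀ t < (0 : ℝ), g t = 0)
    (hgk : ContDiffOn ℝ (k : ℕ∞) g (Set.Ioi (0 : ℝ)))
    {C : ℝ} (hC : 0 < C)
    (hgkb : ∀ t > (0 : ℝ),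
      |iteratedDerivWithin k g (Set.Ioi (0 : ℝ)) t| ≤ C * t ^ (α - (k : ℝ)))
    (hζ : ∀ j : ℕ, j ≤ k → ∃ L : ℝ,
      Tendsto (iteratedDerivWithin j (fun t : ℝ => g t * t ^ (-α)) (Set.Ioi (0 : ℝ)))
        (𝓝[>] (0 : ℝ)) (nhds L))
    (G : ℝ → ℝ)
    (hG : ∀ t : ℝ, G t = if 0 < t then iteratedDerivWithin (k - 1) g (Set.Ioi (0 : ℝ)) t
      else 0) :
    Integrable (fun s : ℝ => |G (1 - s) - G (-s)| ^ β) ∧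
    Tendsto (fun n : ℕ =>
        ∫ s : ℝ, |(n : ℝ) ^ (k - 1) *
          (ginKernel g (k - 1) n n s - ginKernel g (k - 1) n (k - 1) s)| ^ β)
      atTop (nhds (∫ s : ℝ, |G (1 - s) - G (-s)| ^ β)) := by
  classical
  set m : ℕ := k - 1 with hmdef
  have hkm : k = m + 1 := by omega
  set D : ℕ → ℝ → ℝ := fun j => iteratedDerivWithin j g (Set.Ioi (0:ℝ)) with hD
  set Ghat : ℕ → ℝ → ℝ := fun j => zext (D j) with hGhat
  have hGG : G = Ghat m := by
    funext t
    rw [hG t]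
    rfl
  -- basic numerology
  have hβ0 : (0:ℝ) < β := by linarith
  have hmR : ((m : ℕ) : ℝ) = (k : ℝ) - 1 := by
    rw [hmdef]
    push_cast [Nat.cast_sub hk]
    ring
  have hα0 : 0 < α := by
    have : (0:ℝ) ≤ (k:ℝ) - 1 := by
      have : (1:ℝ) ≤ (k:ℝ) := by exact_mod_cast hk
      linarith
    linarith
  have hαk : α - (k:ℝ) < 0 := by
    have h1β : 0 < 1 / β := by positivity
    linarith
  -- bounds near zero
  have hbnd := fun (j : ℕ) (hj : j ≤ k) => deriv_bound_near_zero g hgk hζ hj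
  -- continuity of Ghat j for j ≤ m
  have hGhatCont : ∀ j ≤ m, Continuous (Ghat j) := by
    intro j hj
    have hjk : j < k := by omega
    have hjα : (j : ℝ) < α := by
      have : (j:ℝ) ≤ (m:ℝ) := by exact_mod_cast hj
      rw [hmR] at this
      linarith
    apply zext_continuous
    · intro x hx
      exact (iter_hasDerivAt hgk hjk hx).continuousAt
    · obtain ⟨A, hA, hev⟩ := hbnd j hjk.le
      have htend : Tendsto (fun t : ℝ => A * t ^ (α - j)) (𝓝[>] (0:ℝ)) (𝓝 0) := by
        have := (tendsto_rpow_zero_of_pos (by linarith : (0:ℝ) < α - j)).const_mul A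
        simpa using this
      refine squeeze_zero_norm' ?_ htend
      filter_upwards [hev] with t ht
      simpa [Real.norm_eq_abs] using ht
  -- derivative chain
  have hchain : ∀ j < m, ∀ x : ℝ, HasDerivAt (Ghat j) (Ghat (j+1) x) x := by
    intro j hj x
    have hjk : j < k := by omega
    rcases lt_trichotomy x 0 with hx | hx | hx
    · have h0 : Ghat (j+1) x = 0 := zext_nonpos hx.le
      rw [h0]
      exact zext_hasDerivAt_neg hx
    · subst hx
      have h0 : Ghat (j+1) 0 = 0 := zext_nonpos le_rfl
      rw [h0]
      obtain ⟨A, hA, hev⟩ := hbnd j hjk.le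
      refine zext_hasDerivAt_zero (p := α - j) ?_ hev
      have hj1 : (j:ℝ) + 1 ≤ (m:ℝ) := by exact_mod_cast hj
      rw [hmR] at hj1
      linarith
    · have h0 : Ghat (j+1) x = D (j+1) x := zext_pos hx
      rw [h0]
      exact zext_hasDerivAt_pos hx (iter_hasDerivAt hgk hjk hx)
  -- MVT representation
  have hrep : ∀ n : ℕ, k ≤ n → ∀ x : ℝ,
      ∃ ξ ∈ Icc (x - (m:ℝ) / n) x,
        (n:ℝ) ^ m * dIter (Ghat 0) (1 / (n:ℝ)) m x = Ghat m ξ := by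
    intro n hn x
    have hn0 : (0:ℝ) < (n:ℝ) := by
      have : 0 < n := lt_of_lt_of_le hk hn
      exact_mod_cast this
    have hh : 0 < 1 / (n:ℝ) := by positivity
    obtain ⟨ξ, hξ, he⟩ := dIter_mvt m Ghat hchain hh x
    refine ⟨ξ, ?_, ?_⟩
    · have : x - (m:ℝ) * (1/(n:ℝ)) = x - (m:ℝ)/n := by ring
      rwa [this] at hξ
    · rw [he, ← mul_assoc, ← mul_pow]
      rw [mul_one_div_cancel (ne_of_gt hn0), one_pow, one_mul]
  -- positivity of N = n + k
  have hN0 : ∀ n : ℕ, (0:ℝ) < ((n + k : ℕ) : ℝ) := by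
    intro n
    have : 0 < n + k := by omega
    exact_mod_cast this
  have hNk : ∀ n : ℕ, k ≤ n + k := fun n => Nat.le_add_left k n
  have hmN : ∀ n : ℕ, (m:ℝ) / ((n + k : ℕ) : ℝ) ≤ 1 := by
    intro n
    rw [div_le_one (hN0 n)]
    have : m ≤ n + k := by omega
    exact_mod_cast this
  have hmN0 : ∀ n : ℕ, 0 ≤ (m:ℝ) / ((n + k : ℕ) : ℝ) := by
    intro n
    positivity
  -- the (shifted) approximating sequence
  set Fn : ℕ → ℝ → ℝ := fun n s => ((n + k : ℕ) : ℝ) ^ m *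
      (ginKernel (Ghat 0) m (n + k) (n + k) s - ginKernel (Ghat 0) m (n + k) m s) with hFn
  -- MVT representation of Fn
  have hrepF : ∀ n : ℕ, ∀ s : ℝ,
      ∃ ξ1, ξ1 ∈ Icc (1 - s - (m:ℝ) / ((n + k : ℕ) : ℝ)) (1 - s) ∧
      ∃ ξ2, ξ2 ∈ Icc (-s) ((m:ℝ) / ((n + k : ℕ) : ℝ) - s) ∧
        Fn n s = Ghat m ξ1 - Ghat m ξ2 := by
    intro n s
    have hNne : ((n + k : ℕ) : ℝ) ≠ 0 := ne_of_gt (hN0 n)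
    have h1 : ginKernel (Ghat 0) m (n + k) (n + k) s
        = dIter (Ghat 0) (1 / ((n + k : ℕ) : ℝ)) m (1 - s) := by
      rw [ginKernel_eq_dIter]
      congr 1
      rw [div_self hNne]
    have h2 : ginKernel (Ghat 0) m (n + k) m s
        = dIter (Ghat 0) (1 / ((n + k : ℕ) : ℝ)) m ((m:ℝ) / ((n + k : ℕ) : ℝ) - s) :=
      ginKernel_eq_dIter _ _ _ _ _
    obtain ⟨ξ1, hm1, he1⟩ := hrep (n + k) (hNk n) (1 - s)
    obtain ⟨ξ2, hm2, he2⟩ := hrep (n + k) (hNk n) ((m:ℝ) / ((n + k : ℕ) : ℝ) - s)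
    refine ⟨ξ1, hm1, ξ2, ?_, ?_⟩
    · have hlow : (m:ℝ) / ((n + k : ℕ) : ℝ) - s - (m:ℝ) / ((n + k : ℕ) : ℝ) = -s := by ring
      rwa [hlow] at hm2
    · rw [hFn]
      dsimp only
      rw [h1, h2, mul_sub, he1, he2]
  -- uniform bound on the compact window
  obtain ⟨M0, hM0⟩ := (isCompact_Icc (a := (-1:ℝ)) (b := 2)).exists_bound_of_continuousOn
    (hGhatCont m le_rfl).continuousOn
  set M1 : ℝ := max M0 0 with hM1
  have hM1' : ∀ x ∈ Icc (-1:ℝ) 2, |Ghat m x| ≤ M1 := by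
    intro x hx
    calc |Ghat m x| = ‖Ghat m x‖ := (Real.norm_eq_abs _).symm
      _ ≤ M0 := hM0 x hx
      _ ≤ M1 := le_max_left _ _
  have hM1nonneg : 0 ≤ M1 := le_max_right _ _
  -- the dominating profile
  set B : ℝ → ℝ := fun s => if 1 < s then 0 else
      if s < -1 then C * (-s) ^ (α - (k:ℝ)) else 2 * M1 with hB
  have hBnonneg : ∀ s, 0 ≤ B s := by
    intro s
    rw [hB]
    dsimp only
    split_ifs with h1 h2
    · exact le_refl 0
    · have : (0:ℝ) < -s := by linarith
      positivity
    · linarith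
  have hBnd : ∀ n : ℕ, ∀ s : ℝ, |Fn n s| ≤ B s := by
    intro n s
    by_cases hs1 : 1 < s
    · have hzero : ∀ i : ℕ, i ≤ n + k → ginKernel (Ghat 0) m (n + k) i s = 0 := by
        intro i hi
        apply Finset.sum_eq_zero
        intro j _
        have harg : ((i:ℝ) - (j:ℝ)) / ((n + k : ℕ) : ℝ) - s ≤ 0 := by
          have h1 : ((i:ℝ) - (j:ℝ)) / ((n + k : ℕ) : ℝ) ≤ 1 := by
            rw [div_le_one (hN0 n)]
            have hik : (i:ℝ) ≤ ((n + k : ℕ) : ℝ) := by exact_mod_cast hi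
            have hj0 : (0:ℝ) ≤ (j:ℝ) := Nat.cast_nonneg j
            linarith
          linarith
        have hz : Ghat 0 (((i:ℝ) - (j:ℝ)) / ((n + k : ℕ) : ℝ) - s) = 0 := zext_nonpos harg
        rw [hz, mul_zero]
      have hz1 : ginKernel (Ghat 0) m (n + k) (n + k) s = 0 := hzero (n + k) le_rfl
      have hz2 : ginKernel (Ghat 0) m (n + k) m s = 0 := hzero m (by omega)
      have : Fn n s = 0 := by rw [hFn]; dsimp only; rw [hz1, hz2]; ring
      rw [this, hB]
      simp [hs1]
    · obtain ⟨ξ1, hmem1, ξ2, hmem2, heq⟩ := hrepF n s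
      by_cases hs2 : s < -1
      · -- far region
        have hsneg : (0:ℝ) < -s := by linarith
        have hI1 : ξ1 ∈ Icc (-s) (1 - s) := by
          constructor
          · have := hmem1.1
            have := hmN n
            linarith
          · exact hmem1.2
        have hI2 : ξ2 ∈ Icc (-s) (1 - s) := by
          constructor
          · exact hmem2.1
          · have := hmem2.2
            have := hmN n
            linarith
        have hderiv : ∀ y ∈ Icc (-s) (1 - s),
            HasDerivWithinAt (Ghat m) (D k y) (Icc (-s) (1 - s)) y := by
          intro y hy
          have hy0 : 0 < y := lt_of_lt_of_le hsneg hy.1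
          have hmk : m < k := by omega
          have hder : HasDerivWithinAt (D m) (D k y) (Icc (-s) (1 - s)) y := by
            have h := (iter_hasDerivAt hgk hmk hy0).hasDerivWithinAt
              (s := Icc (-s) (1 - s))
            have hDk : iteratedDerivWithin (m+1) g (Set.Ioi (0:ℝ)) y = D k y := by
              simp only [hD]
              rw [hkm]
            rwa [hDk] at h
          refine hder.congr ?_ ?_
          · intro z hz
            exact zext_pos (lt_of_lt_of_le hsneg hz.1)
          · exact zext_pos hy0
        have hdbound : ∀ y ∈ Icc (-s) (1 - s), ‖D k y‖ ≤ C * (-s) ^ (α - (k:ℝ)) := by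
          intro y hy
          have hy0 : 0 < y := lt_of_lt_of_le hsneg hy.1
          rw [Real.norm_eq_abs]
          refine (hgkb y hy0).trans ?_
          exact mul_le_mul_of_nonneg_left
            (Real.rpow_le_rpow_of_nonpos hsneg hy.1 (le_of_lt hαk)) hC.le
        have hkey := Convex.norm_image_sub_le_of_norm_hasDerivWithin_le hderiv hdbound
          (convex_Icc _ _) hI2 hI1
        have hdist : ‖ξ1 - ξ2‖ ≤ 1 := by
          rw [Real.norm_eq_abs]
          rw [abs_le]
          constructor
          · have := hI1.1; have := hI2.2; linarith
          · have := hI1.2; have := hI2.1; linarith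
        have hCpos : 0 ≤ C * (-s) ^ (α - (k:ℝ)) := by positivity
        have : |Fn n s| ≤ C * (-s) ^ (α - (k:ℝ)) := by
          rw [heq, ← Real.norm_eq_abs]
          calc ‖Ghat m ξ1 - Ghat m ξ2‖ ≤ C * (-s) ^ (α - (k:ℝ)) * ‖ξ1 - ξ2‖ := hkey
            _ ≤ C * (-s) ^ (α - (k:ℝ)) * 1 := mul_le_mul_of_nonneg_left hdist hCpos
            _ = C * (-s) ^ (α - (k:ℝ)) := mul_one _
        rw [hB]
        simpa [hs1, hs2] using this
      · -- middle region
        have hsle : s ≤ 1 := le_of_not_gt hs1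
        have hsge : -1 ≤ s := le_of_not_gt hs2
        have hI1 : ξ1 ∈ Icc (-1:ℝ) 2 := by
          constructor
          · have := hmem1.1; have := hmN n; linarith
          · have := hmem1.2; linarith
        have hI2 : ξ2 ∈ Icc (-1:ℝ) 2 := by
          constructor
          · have := hmem2.1; linarith
          · have := hmem2.2; have := hmN n; linarith
        have : |Fn n s| ≤ 2 * M1 := by
          rw [heq]
          calc |Ghat m ξ1 - Ghat m ξ2| ≤ |Ghat m ξ1| + |Ghat m ξ2| := abs_sub _ _
            _ ≤ M1 + M1 := add_le_add (hM1' _ hI1) (hM1' _ hI2)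
            _ = 2 * M1 := by ring
        rw [hB]
        simpa [hs1, hs2] using this
  -- the dominating function
  set bound : ℝ → ℝ := fun s => B s ^ β with hbounddef
  have hBmeas : Measurable B := by
    rw [hB]
    refine Measurable.ite (measurableSet_lt measurable_const measurable_id) measurable_const ?_
    refine Measurable.ite (measurableSet_lt measurable_id measurable_const) ?_ measurable_const
    exact (measurable_id.neg.pow_const _).const_mul C
  have hboundmeas : Measurable bound := hBmeas.pow_const β
  have hexpβ : (α - (k:ℝ)) * β < -1 := by
    have h1 : α - (k:ℝ) < -(1/β) := by linarith
    calc (α - (k:ℝ)) * β < (-(1/β)) * β := by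
          exact mul_lt_mul_of_pos_right h1 hβ0
      _ = -1 := by field_simp
  have hboundInt : Integrable bound := by
    have hunion : Iio (-1:ℝ) ∪ Icc (-1:ℝ) 1 ∪ Ioi (1:ℝ) = univ := by
      ext x
      simp only [mem_union, mem_Iio, mem_Icc, mem_Ioi, mem_univ, iff_true]
      by_cases h1 : x < -1
      · left; left; exact h1
      · by_cases h2 : x ≤ 1
        · left; right; exact ⟨le_of_not_gt h1, h2⟩
        · right; linarith
    have i3 : IntegrableOn bound (Ioi (1:ℝ)) := by
      refine (integrableOn_zero (ε' := ℝ)).congr_fun ?_ measurableSet_Ioi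
      intro x hx
      have hx1 : (1:ℝ) < x := hx
      rw [hbounddef]
      dsimp only
      rw [hB]
      simp only [if_pos hx1]
      rw [Real.zero_rpow (ne_of_gt hβ0)]
    have i2 : IntegrableOn bound (Icc (-1:ℝ) 1) := by
      have hconst : IntegrableOn (fun _ : ℝ => (2 * M1) ^ β) (Icc (-1:ℝ) 1) :=
        integrableOn_const measure_Icc_lt_top.ne
      refine hconst.congr_fun ?_ measurableSet_Icc
      intro x hx
      rw [hbounddef]
      dsimp only
      rw [hB]
      have h1 : ¬ (1:ℝ) < x := not_lt.mpr hx.2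
      have h2 : ¬ x < -1 := not_lt.mpr hx.1
      simp only [if_neg h1, if_neg h2]
    have i1 : IntegrableOn bound (Iio (-1:ℝ)) := by
      have base : IntegrableOn (fun t : ℝ => t ^ ((α - (k:ℝ)) * β)) (Ioi (1:ℝ)) :=
        integrableOn_Ioi_rpow_of_lt hexpβ one_pos
      have base2 : IntegrableOn (fun t : ℝ => C ^ β * t ^ ((α - (k:ℝ)) * β)) (Ioi (1:ℝ)) :=
        base.const_mul _
      have hmeas' : Measurable (fun t : ℝ => C ^ β * t ^ ((α - (k:ℝ)) * β)) :=
        (measurable_id.pow_const _).const_mul _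
      have hind : Integrable
          (Set.indicator (Ioi (1:ℝ)) (fun t : ℝ => C ^ β * t ^ ((α - (k:ℝ)) * β))) :=
        (integrable_indicator_iff measurableSet_Ioi).2 base2
      have hneg := hind.comp_neg
      have heqind : (fun s : ℝ =>
          Set.indicator (Ioi (1:ℝ)) (fun t : ℝ => C ^ β * t ^ ((α - (k:ℝ)) * β)) (-s))
          = Set.indicator (Iio (-1:ℝ)) (fun s : ℝ => C ^ β * (-s) ^ ((α - (k:ℝ)) * β)) := by
        funext s
        by_cases hs : s < -1
        · have h1 : (1:ℝ) < -s := by linarith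
          rw [Set.indicator_of_mem (show -s ∈ Ioi (1:ℝ) from h1),
            Set.indicator_of_mem (show s ∈ Iio (-1:ℝ) from hs)]
        · have h1 : ¬ (1:ℝ) < -s := by intro h; exact hs (by linarith)
          rw [Set.indicator_of_notMem (show (-s) ∉ Ioi (1:ℝ) from fun hmem => h1 hmem)
              (fun t : ℝ => C ^ β * t ^ ((α - (k:ℝ)) * β)),
            Set.indicator_of_notMem (show s ∉ Iio (-1:ℝ) from fun hmem => hs hmem)
              (fun s : ℝ => C ^ β * (-s) ^ ((α - (k:ℝ)) * β))]
      have hneg2 : Integrable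
          (Set.indicator (Iio (-1:ℝ)) (fun s : ℝ => C ^ β * (-s) ^ ((α - (k:ℝ)) * β))) :=
        hneg.congr (ae_of_all _ fun s => congrFun heqind s)
      have hIOn : IntegrableOn (fun s : ℝ => C ^ β * (-s) ^ ((α - (k:ℝ)) * β)) (Iio (-1:ℝ)) :=
        (integrable_indicator_iff measurableSet_Iio).1 hneg2
      refine hIOn.congr_fun ?_ measurableSet_Iio
      intro x hx
      have hx1 : x < -1 := hx
      have hxpos : (0:ℝ) < -x := by linarith
      have h1 : ¬ (1:ℝ) < x := by linarith
      rw [hbounddef]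
      dsimp only
      rw [hB]
      simp only [if_neg h1, if_pos hx1]
      rw [Real.mul_rpow hC.le (Real.rpow_nonneg hxpos.le _), ← Real.rpow_mul hxpos.le]
    have : IntegrableOn bound (Iio (-1:ℝ) ∪ Icc (-1:ℝ) 1 ∪ Ioi (1:ℝ)) :=
      (i1.union i2).union i3
    rw [hunion] at this
    exact integrableOn_univ.mp this
  -- continuity of |x| ^ β
  have habsC : Continuous (fun x : ℝ => |x| ^ β) := by
    rw [continuous_iff_continuousAt]
    intro x
    exact (Real.continuousAt_rpow_const |x| β (Or.inr hβ0.le)).comp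
      continuous_abs.continuousAt
  -- continuity of Fn n
  have hFnCont : ∀ n : ℕ, Continuous (Fn n) := by
    intro n
    have hgin : ∀ i : ℕ, Continuous (fun s => ginKernel (Ghat 0) m (n + k) i s) := by
      intro i
      apply continuous_finset_sum
      intro j _
      exact continuous_const.mul
        ((hGhatCont 0 (Nat.zero_le m)).comp (continuous_const.sub continuous_id))
    exact continuous_const.mul ((hgin (n + k)).sub (hgin m))
  -- pointwise limit
  have hlim : ∀ s : ℝ, Tendsto (fun n : ℕ => Fn n s) atTop (𝓝 (Ghat m (1 - s) - Ghat m (-s))) := by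
    intro s
    choose ξ1 h1 ξ2 h2 heq using fun n => hrepF n s
    have hNt : Tendsto (fun n : ℕ => ((n + k : ℕ) : ℝ)) atTop atTop :=
      tendsto_natCast_atTop_atTop.comp (tendsto_add_atTop_nat k)
    have h0 : Tendsto (fun n : ℕ => (m:ℝ) / ((n + k : ℕ) : ℝ)) atTop (𝓝 0) :=
      Tendsto.div_atTop tendsto_const_nhds hNt
    have hl1 : Tendsto (fun n : ℕ => 1 - s - (m:ℝ) / ((n + k : ℕ) : ℝ)) atTop (𝓝 (1 - s)) := by
      have := tendsto_const_nhds (f := atTop (α := ℕ)) (x := 1 - s) |>.sub h0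
      simpa using this
    have hξ1 : Tendsto ξ1 atTop (𝓝 (1 - s)) :=
      tendsto_of_tendsto_of_tendsto_of_le_of_le hl1 tendsto_const_nhds
        (fun n => (h1 n).1) (fun n => (h1 n).2)
    have hl2 : Tendsto (fun n : ℕ => (m:ℝ) / ((n + k : ℕ) : ℝ) - s) atTop (𝓝 (-s)) := by
      have := h0.sub (tendsto_const_nhds (f := atTop (α := ℕ)) (x := s))
      simpa using this
    have hξ2 : Tendsto ξ2 atTop (𝓝 (-s)) :=
      tendsto_of_tendsto_of_tendsto_of_le_of_le tendsto_const_nhds hl2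
        (fun n => (h2 n).1) (fun n => (h2 n).2)
    have hcont := hGhatCont m le_rfl
    have hcomp := ((hcont.tendsto (1 - s)).comp hξ1).sub ((hcont.tendsto (-s)).comp hξ2)
    exact hcomp.congr (fun n => (heq n).symm)
  -- dominated convergence
  have hmeasF : ∀ n : ℕ, AEStronglyMeasurable (fun s => |Fn n s| ^ β) volume := by
    intro n
    exact (habsC.comp (hFnCont n)).aestronglyMeasurable
  have hboundF : ∀ n : ℕ, ∀ᵐ s : ℝ, ‖|Fn n s| ^ β‖ ≤ bound s := by
    intro n
    refine ae_of_all _ fun s => ?_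
    rw [Real.norm_eq_abs, abs_of_nonneg (Real.rpow_nonneg (abs_nonneg _) β)]
    exact Real.rpow_le_rpow (abs_nonneg _) (hBnd n s) hβ0.le
  have hlimF : ∀ᵐ s : ℝ, Tendsto (fun n : ℕ => |Fn n s| ^ β) atTop
      (𝓝 (|Ghat m (1 - s) - Ghat m (-s)| ^ β)) := by
    refine ae_of_all _ fun s => ?_
    exact (habsC.tendsto _).comp (hlim s)
  have hDCT := tendsto_integral_of_dominated_convergence bound hmeasF hboundInt hboundF hlimF
  -- integrability of the limit function
  have hlimCont : Continuous (fun s : ℝ => Ghat m (1 - s) - Ghat m (-s)) := by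
    have hc := hGhatCont m le_rfl
    exact (hc.comp (continuous_const.sub continuous_id)).sub (hc.comp continuous_neg)
  have hIntf : Integrable (fun s : ℝ => |Ghat m (1 - s) - Ghat m (-s)| ^ β) := by
    refine Integrable.mono' hboundInt (habsC.comp hlimCont).aestronglyMeasurable ?_
    refine ae_of_all _ fun s => ?_
    rw [Real.norm_eq_abs, abs_of_nonneg (Real.rpow_nonneg (abs_nonneg _) β)]
    refine le_of_tendsto ((habsC.tendsto _).comp (hlim s)) ?_
    refine Filter.Eventually.of_forall fun n => ?_
    exact Real.rpow_le_rpow (abs_nonneg _) (hBnd n s) hβ0.le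
  -- integral congruence between the g-kernels and the Ghat-kernels
  have hinteq : ∀ n : ℕ,
      (∫ s : ℝ, |((n + k : ℕ) : ℝ) ^ m *
        (ginKernel g m (n + k) (n + k) s - ginKernel g m (n + k) m s)| ^ β)
      = ∫ s : ℝ, |Fn n s| ^ β := by
    intro n
    apply integral_congr_ae
    have hae : ∀ᵐ s : ℝ, ∀ i : ℕ, ∀ j : ℕ,
        s ≠ ((i:ℝ) - (j:ℝ)) / ((n + k : ℕ) : ℝ) := by
      rw [ae_all_iff]
      intro i
      rw [ae_all_iff]
      intro j
      rw [ae_iff]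
      simp only [ne_eq, not_not, setOf_eq_eq_singleton]
      exact measure_singleton _
    filter_upwards [hae] with s hs
    have hkernel : ∀ i : ℕ, ginKernel g m (n + k) i s = ginKernel (Ghat 0) m (n + k) i s := by
      intro i
      refine Finset.sum_congr rfl fun j _ => ?_
      have hne : ((i:ℝ) - (j:ℝ)) / ((n + k : ℕ) : ℝ) - s ≠ 0 := by
        intro h
        exact hs i j (by linarith [sub_eq_zero.mp h])
      rcases lt_or_gt_of_ne hne with ht | ht
      · have hgz : g (((i:ℝ) - (j:ℝ)) / ((n + k : ℕ) : ℝ) - s) = 0 := hg0 _ ht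
        have hGz : Ghat 0 (((i:ℝ) - (j:ℝ)) / ((n + k : ℕ) : ℝ) - s) = 0 := zext_nonpos ht.le
        rw [hgz, hGz]
      · have hGz : Ghat 0 (((i:ℝ) - (j:ℝ)) / ((n + k : ℕ) : ℝ) - s)
            = g (((i:ℝ) - (j:ℝ)) / ((n + k : ℕ) : ℝ) - s) := by
          have h1 : Ghat 0 (((i:ℝ) - (j:ℝ)) / ((n + k : ℕ) : ℝ) - s)
              = D 0 (((i:ℝ) - (j:ℝ)) / ((n + k : ℕ) : ℝ) - s) := zext_pos ht
          rw [h1, hD]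
          simp
        rw [hGz]
    rw [hFn]
    dsimp only
    rw [hkernel (n + k), hkernel m]
  -- conclusion
  constructor
  · rw [hGG]
    exact hIntf
  · rw [hGG]
    rw [← Filter.tendsto_add_atTop_iff_nat k]
    have hfun : (fun n : ℕ => ∫ s : ℝ, |((n + k : ℕ) : ℝ) ^ m *
        (ginKernel g m (n + k) (n + k) s - ginKernel g m (n + k) m s)| ^ β)
        = fun n : ℕ => ∫ s : ℝ, |Fn n s| ^ β := funext hinteq
    exact hfun ▸ hDCT
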